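/- Let K be a field of prime characteristic p > 0 and let P_n(t) ∈ K[t] be the polynomials defined by P_0 = 1, P_1 = t, and P_{n+2} = t·P_{n+1} − P_n for n ≥ 0. Then the set of monic irreducible polynomials f ∈ K[t] such that f divides P_{p^e−2} for some integer e ≥ 1 is infinite. -/

import Mathlib

/-- The polynomials `P₀ = 1`, `P₁ = t`, `P_{n+2} = t·P_{n+1} − P_n`. -/
noncomputable def Ppoly (K : Type) [Field K] : ℕ → Polynomial K
  | 0 => 1
  | 1 => Polynomial.X
  | n + 2 => Polynomial.X * Ppoly K (n + 1) - Ppoly K n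

open Polynomial

noncomputable def Wpoly (K : Type) [Field K] : ℕ → Polynomial K
  | 0 => 2
  | 1 => Polynomial.X
  | n + 2 => Polynomial.X * Wpoly K (n + 1) - Wpoly K n

lemma two_step {C : ℕ → Prop} (h0 : C 0) (h1 : C 1)
    (hs : ∀ n, C n → C (n+1) → C (n+2)) : ∀ n, C n := by
  have key : ∀ n, C n ∧ C (n+1) := by
    intro n
    induction n with
    | zero => exact ⟨h0, h1⟩
    | succ k ih => exact ⟨ih.2, hs k ih.1 ih.2⟩
  exact fun n => (key n).1

variable {K : Type} [Field K]

lemma Ppoly_zero : Ppoly K 0 = 1 := by simp [Ppoly]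
lemma Ppoly_one : Ppoly K 1 = X := by simp [Ppoly]
lemma Ppoly_add_two (n : ℕ) : Ppoly K (n + 2) = X * Ppoly K (n + 1) - Ppoly K n := by
  simp [Ppoly]
lemma Wpoly_zero : Wpoly K 0 = 2 := by simp [Wpoly]
lemma Wpoly_one : Wpoly K 1 = X := by simp [Wpoly]
lemma Wpoly_add_two (n : ℕ) : Wpoly K (n + 2) = X * Wpoly K (n + 1) - Wpoly K n := by
  simp [Wpoly]

lemma Ppoly_md : ∀ n : ℕ, (Ppoly K n).Monic ∧ (Ppoly K n).degree = n := by
  refine two_step ?_ ?_ ?_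
  · exact ⟨monic_one, by simp [Ppoly_zero]⟩
  · exact ⟨monic_X, by simp [Ppoly_one]⟩
  · rintro n ⟨h0m, h0d⟩ ⟨h1m, h1d⟩
    have hm : (X * Ppoly K (n+1)).Monic := monic_X.mul h1m
    have hd : (X * Ppoly K (n+1)).degree = ((n+2 : ℕ) : WithBot ℕ) := by
      rw [degree_mul, degree_X, h1d]
      exact_mod_cast (by omega : 1 + (n+1) = n + 2)
    have hlt : (Ppoly K n).degree < (X * Ppoly K (n+1)).degree := by
      rw [hd, h0d]
      exact_mod_cast by omega
    refine ⟨?_, ?_⟩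
    · rw [Ppoly_add_two]; exact hm.sub_of_left hlt
    · rw [Ppoly_add_two, degree_sub_eq_left_of_degree_lt hlt, hd]

lemma Ppoly_inv (n : ℕ) :
    (Ppoly K (n+1))^2 + (Ppoly K n)^2 - X * Ppoly K (n+1) * Ppoly K n = 1 := by
  induction n with
  | zero => simp [Ppoly_zero, Ppoly_one]; ring
  | succ k ih =>
    have h : Ppoly K (k+1+1) = X * Ppoly K (k+1) - Ppoly K k := Ppoly_add_two k
    linear_combination ih + (Ppoly K (k+1+1) - Ppoly K k) * h

lemma Wpoly_eq : ∀ n : ℕ, Wpoly K (n+2) = X * Ppoly K (n+1) - 2 * Ppoly K n := by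
  refine two_step ?_ ?_ ?_
  · rw [Wpoly_add_two, Wpoly_one, Wpoly_zero, Ppoly_one, Ppoly_zero]; ring
  · rw [Wpoly_add_two, Wpoly_add_two, Wpoly_one, Wpoly_zero,
      Ppoly_add_two, Ppoly_one, Ppoly_zero]; ring
  · intro n ih0 ih1
    have h3 : Ppoly K (n+2+1) = X * Ppoly K (n+1+1) - Ppoly K (n+1) := Ppoly_add_two (n+1)
    have h2 : Ppoly K (n+2) = X * Ppoly K (n+1) - Ppoly K n := Ppoly_add_two n
    rw [Wpoly_add_two (n+2), ih0, ih1, h3, h2]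
    ring

lemma Ppoly_key (n : ℕ) :
    (X^2 - 4) * (Ppoly K (n+2) * Ppoly K n) = (Wpoly K (n+2))^2 - X^2 := by
  have hW := Wpoly_eq (K := K) n
  have hrec := Ppoly_add_two (K := K) n
  have hinv := Ppoly_inv (K := K) n
  linear_combination (-(Wpoly K (n+2) + X * Ppoly K (n+1) - 2 * Ppoly K n)) * hW +
    ((X^2 - 4) * Ppoly K n) * hrec + (-(X^2) : Polynomial K) * hinv

lemma Wpoly_pow_char (p : ℕ) (hp : p.Prime) [CharP K p] (e : ℕ) :
    Wpoly K (p ^ e) = (X : Polynomial K) ^ (p ^ e) := by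
  haveI : Fact p.Prime := ⟨hp⟩
  set t : Polynomial K := X with ht
  set g : Polynomial (Polynomial K) := X ^ 2 - C t * X + 1 with hgdef
  have hdlt : degree (C t * X - 1) < 2 := by
    have h1 : C t * X - (1 : Polynomial (Polynomial K)) = C t * X + C (-1) := by
      rw [map_neg, map_one]; ring
    rw [h1]
    exact degree_linear_lt
  have hgeq : g = X ^ 2 - (C t * X - 1) := by rw [hgdef]; ring
  have hg : g.Monic := by
    rw [hgeq]
    exact monic_X_pow_sub (by exact_mod_cast hdlt)
  have h2 : degree ((X : Polynomial (Polynomial K)) ^ 2) = 2 := by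
    rw [degree_X_pow]; norm_cast
  have hdeg : g.degree = 2 := by
    rw [hgeq, degree_sub_eq_left_of_degree_lt (by rw [h2]; exact hdlt), h2]
  haveI : Nontrivial (AdjoinRoot g) := AdjoinRoot.nontrivial g (by rw [hdeg]; decide)
  set φ := AdjoinRoot.of g with hφ
  set x := AdjoinRoot.root g with hx
  have hgx : x ^ 2 - φ t * x + 1 = 0 := by
    have h0 := AdjoinRoot.eval₂_root g
    rw [hgdef] at h0
    simpa [eval₂_sub, eval₂_add, eval₂_mul, eval₂_pow, eval₂_X, eval₂_C, eval₂_one] using h0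
  obtain ⟨y, hy⟩ : ∃ y, y = φ t - x := ⟨_, rfl⟩
  have hxplus : φ t = x + y := by rw [hy]; ring
  have hxy : x * y = 1 := by rw [hy]; linear_combination -hgx
  have hW : ∀ n : ℕ, φ (Wpoly K n) = x ^ n + y ^ n := by
    refine two_step ?_ ?_ ?_
    · rw [Wpoly_zero, pow_zero, pow_zero, map_ofNat]; norm_num
    · rw [Wpoly_one, pow_one, pow_one, ← ht, hxplus]
    · intro n ih0 ih1
      rw [Wpoly_add_two, map_sub, map_mul, ih0, ih1, ← ht]
      linear_combination (x^(n+1) + y^(n+1)) * hxplus + (x^n + y^n) * hxy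
  have hinj : Function.Injective (algebraMap (Polynomial K) (AdjoinRoot g)) :=
    (AdjoinRoot.powerBasis' hg).basis.algebraMap_injective
  rw [AdjoinRoot.algebraMap_eq, ← hφ] at hinj
  haveI : CharP (AdjoinRoot g) p := charP_of_injective_ringHom hinj p
  apply hinj
  rw [hW, map_pow, hxplus, add_pow_char_pow]


/-- Over a field of prime characteristic `p`, the set of monic irreducible polynomials dividing
some `P_{p^e − 2}` with `e ≥ 1` is infinite. -/
theorem stmt_10 {K : Type} [Field K] (p : ℕ) (hp : p.Prime) [CharP K p] :
    {f : Polynomial K | f.Monic ∧ Irreducible f ∧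
      ∃ e : ℕ, 1 ≤ e ∧ f ∣ Ppoly K (p ^ e - 2)}.Infinite := by
  classical
  by_contra hfin
  rw [Set.not_infinite] at hfin
  set D : ℕ := ∑ f ∈ hfin.toFinset, f.natDegree with hD
  set e : ℕ := 2 * D + 5 with he
  have he1 : 1 ≤ e := by omega
  have hq4 : 2 * D + 4 < p ^ e := by
    calc 2 * D + 4 < 2 ^ e := by have := Nat.lt_two_pow_self (n := e); omega
    _ ≤ p ^ e := Nat.pow_le_pow_left hp.two_le e
  set q : ℕ := p ^ e with hqdef
  have hq2 : 2 ≤ q := by omega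
  obtain ⟨hPm, hPd⟩ := Ppoly_md (K := K) (q - 2)
  have hP0 : Ppoly K (q - 2) ≠ 0 := hPm.ne_zero
  have hPnd : (Ppoly K (q - 2)).natDegree = q - 2 := natDegree_eq_of_degree_eq_some hPd
  have hcast : ((q : ℕ) : K) = 0 := by
    rw [hqdef, Nat.cast_pow, CharP.cast_eq_zero K p, zero_pow (by omega : e ≠ 0)]
  have hkey := Ppoly_key (K := K) (q - 2)
  rw [show q - 2 + 2 = q from by omega] at hkey
  rw [hqdef] at hkey
  rw [Wpoly_pow_char p hp e] at hkey
  rw [← hqdef] at hkey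
  clear_value q
  set A : Polynomial K := X ^ q - X with hA
  set B : Polynomial K := X ^ q + X with hB
  have hXlt : (X : Polynomial K).degree < (q : WithBot ℕ) := by
    rw [degree_X]; exact_mod_cast (by omega : 1 < q)
  have hAm : A.Monic := monic_X_pow_sub hXlt
  have hBm : B.Monic := monic_X_pow_add hXlt
  have hA0 : A ≠ 0 := hAm.ne_zero
  have hB0 : B ≠ 0 := hBm.ne_zero
  have hdA : derivative A = -1 := by
    rw [hA, derivative_sub, derivative_X_pow, derivative_X, hcast, map_zero, zero_mul, zero_sub]
  have hdB : derivative B = 1 := by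
    rw [hB, derivative_add, derivative_X_pow, derivative_X, hcast, map_zero, zero_mul, zero_add]
  have hAsf : Squarefree A := by
    refine Separable.squarefree ?_
    rw [separable_def, hdA]
    exact IsCoprime.neg_right isCoprime_one_right
  have hBsf : Squarefree B := by
    refine Separable.squarefree ?_
    rw [separable_def, hdB]
    exact isCoprime_one_right
  -- the divisibility
  have hdvd : Ppoly K (q - 2) ∣ A * B := by
    refine ⟨(X ^ 2 - 4) * Ppoly K q, ?_⟩
    rw [hA, hB]
    linear_combination -hkey
  -- factors
  set M := UniqueFactorizationMonoid.normalizedFactors (Ppoly K (q - 2)) with hM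
  have hmon : ∀ f ∈ M, f.Monic := by
    intro f hf
    have h1 := UniqueFactorizationMonoid.normalize_normalized_factor f hf
    have h2 := UniqueFactorizationMonoid.irreducible_of_normalized_factor f hf
    rw [← h1]
    exact monic_normalize h2.ne_zero
  have hMm : M.prod.Monic := by
    have := monic_multiset_prod_of_monic M id (fun f hf => hmon f hf)
    rwa [Multiset.map_id] at this
  have hprod : M.prod = Ppoly K (q - 2) :=
    eq_of_monic_of_associated hMm hPm (UniqueFactorizationMonoid.prod_normalizedFactors hP0)
  have hsum : q - 2 = (M.map natDegree).sum := by
    rw [← hPnd, ← hprod, natDegree_multiset_prod_of_monic M hmon]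
  have hmem : M.toFinset ⊆ hfin.toFinset := by
    intro f hf
    rw [Multiset.mem_toFinset] at hf
    rw [Set.Finite.mem_toFinset]
    refine ⟨hmon f hf, UniqueFactorizationMonoid.irreducible_of_normalized_factor f hf,
      e, he1, ?_⟩
    rw [← hqdef]
    exact UniqueFactorizationMonoid.dvd_of_mem_normalizedFactors hf
  have hABne : A * B ≠ 0 := mul_ne_zero hA0 hB0
  have hle : M ≤ UniqueFactorizationMonoid.normalizedFactors (A * B) :=
    (UniqueFactorizationMonoid.dvd_iff_normalizedFactors_le_normalizedFactors hP0 hABne).mp hdvd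
  have hcount : ∀ f ∈ M.toFinset, M.count f ≤ 2 := by
    intro f _
    have h1 : M.count f ≤ (UniqueFactorizationMonoid.normalizedFactors (A * B)).count f :=
      Multiset.le_iff_count.mp hle f
    rw [UniqueFactorizationMonoid.normalizedFactors_mul hA0 hB0, Multiset.count_add] at h1
    have hA1 : (UniqueFactorizationMonoid.normalizedFactors A).count f ≤ 1 :=
      Multiset.nodup_iff_count_le_one.mp
        ((UniqueFactorizationMonoid.squarefree_iff_nodup_normalizedFactors hA0).mp hAsf) f
    have hB1 : (UniqueFactorizationMonoid.normalizedFactors B).count f ≤ 1 :=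
      Multiset.nodup_iff_count_le_one.mp
        ((UniqueFactorizationMonoid.squarefree_iff_nodup_normalizedFactors hB0).mp hBsf) f
    omega
  have h1 : (M.map natDegree).sum = ∑ f ∈ M.toFinset, M.count f • f.natDegree :=
    Finset.sum_multiset_map_count M natDegree
  have h2 : ∑ f ∈ M.toFinset, M.count f • f.natDegree ≤ ∑ f ∈ M.toFinset, 2 * f.natDegree := by
    refine Finset.sum_le_sum ?_
    intro f hf
    rw [smul_eq_mul]
    exact Nat.mul_le_mul_right _ (hcount f hf)
  have h3 : ∑ f ∈ M.toFinset, 2 * f.natDegree ≤ ∑ f ∈ hfin.toFinset, 2 * f.natDegree :=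
    Finset.sum_le_sum_of_subset hmem
  have h4 : ∑ f ∈ hfin.toFinset, 2 * f.natDegree = 2 * D := by
    rw [hD, Finset.mul_sum]
  omega
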